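/- Consider the function f(y) = log(2)·((1-y)·(1-log(2-2y)) - h₂(y)/2) on [0,1/2] (the limiting derivative Ğ'_y(0)). Then f(1/2) = 0, f(0) = log(2)·(1-log 2) > 0, f'(y) = log(2)·log(2(1-y)) - (1/2)·log((1-y)/y) satisfies f'(1/2) = 0 and f'(y) → -∞ as y → 0⁺, and f''(y) = (1/(1-y))·(1/(2y) - log 2) > 0 for y ∈ (0,1/2); consequently f(y) > 0 for all y ∈ (0,1/2). -/

import Mathlib

noncomputable def binEnt (x : ℝ) : ℝ := -x * Real.logb 2 x - (1 - x) * Real.logb 2 (1 - x)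

noncomputable def fDer0 (y : ℝ) : ℝ :=
  Real.log 2 * ((1 - y) * (1 - Real.log (2 - 2 * y)) - binEnt y / 2)

open Real Set Filter

lemma hasDerivAt_fDer0 {y : ℝ} (h0 : 0 < y) (h1 : y < 1) :
    HasDerivAt fDer0 (Real.log 2 * Real.log (2 * (1 - y)) - 1 / 2 * Real.log ((1 - y) / y)) y := by
  have hy1 : (0:ℝ) < 1 - y := by linarith
  have h2 : (2:ℝ) - 2 * y ≠ 0 := by linarith
  have hlog2 : Real.log 2 ≠ 0 := by positivity
  -- derivative of (1-y)(1 - log(2-2y))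
  have h1' : HasDerivAt (fun y : ℝ => 1 - y) (-1) y := by
    simpa using (hasDerivAt_id y).const_sub 1
  have hlin : HasDerivAt (fun y : ℝ => 2 - 2 * y) (-2) y := by
    simpa using ((hasDerivAt_id y).const_mul 2).const_sub 2
  have hlog : HasDerivAt (fun y : ℝ => Real.log (2 - 2 * y)) (-2 / (2 - 2 * y)) y := hlin.log h2
  have hA : HasDerivAt (fun y : ℝ => (1 - y) * (1 - Real.log (2 - 2 * y)))
      ((-1) * (1 - Real.log (2 - 2 * y)) + (1 - y) * (-(-2 / (2 - 2 * y)))) y :=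
    h1'.mul (hlog.const_sub 1)
  -- derivative of binEnt
  have hmy : HasDerivAt (fun y : ℝ => y * Real.log y) (Real.log y + 1) y :=
    Real.hasDerivAt_mul_log h0.ne'
  have hm1 : HasDerivAt (fun y : ℝ => (1 - y) * Real.log (1 - y)) ((Real.log (1 - y) + 1) * (-1)) y := by
    exact (Real.hasDerivAt_mul_log hy1.ne').comp y h1'
  have hbeq : binEnt = fun y : ℝ => (-(y * Real.log y) - (1 - y) * Real.log (1 - y)) / Real.log 2 := by
    funext z; simp only [binEnt, Real.logb]; ring
  have hB : HasDerivAt binEnt ((-(Real.log y + 1) - (Real.log (1 - y) + 1) * (-1)) / Real.log 2) y := by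
    rw [hbeq]; exact (hmy.neg.sub hm1).div_const _
  have hF : HasDerivAt fDer0
      (Real.log 2 * (((-1) * (1 - Real.log (2 - 2 * y)) + (1 - y) * (-(-2 / (2 - 2 * y)))) -
        ((-(Real.log y + 1) - (Real.log (1 - y) + 1) * (-1)) / Real.log 2) / 2)) y := by
    exact (hA.sub (hB.div_const 2)).const_mul _
  convert hF using 1
  rw [show (2:ℝ) - 2 * y = 2 * (1 - y) by ring, Real.log_mul two_ne_zero hy1.ne',
    Real.log_div hy1.ne' h0.ne']
  field_simp
  ring

noncomputable def Fder (y : ℝ) : ℝ :=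
  Real.log 2 * Real.log (2 * (1 - y)) - 1 / 2 * Real.log ((1 - y) / y)

lemma hasDerivAt_Fder {y : ℝ} (h0 : 0 < y) (h1 : y < 1) :
    HasDerivAt Fder (1 / (1 - y) * (1 / (2 * y) - Real.log 2)) y := by
  have hy1 : (0:ℝ) < 1 - y := by linarith
  have h1' : HasDerivAt (fun y : ℝ => 1 - y) (-1) y := by
    simpa using (hasDerivAt_id y).const_sub 1
  have hlin : HasDerivAt (fun y : ℝ => 2 * (1 - y)) (2 * (-1)) y := h1'.const_mul 2
  have hl1 : HasDerivAt (fun y : ℝ => Real.log (2 * (1 - y))) ((2 * (-1)) / (2 * (1 - y))) y :=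
    hlin.log (by positivity)
  have hq : HasDerivAt (fun y : ℝ => (1 - y) / y) (((-1) * y - (1 - y) * 1) / y ^ 2) y :=
    h1'.div (hasDerivAt_id y) h0.ne'
  have hl2 : HasDerivAt (fun y : ℝ => Real.log ((1 - y) / y))
      ((((-1) * y - (1 - y) * 1) / y ^ 2) / ((1 - y) / y)) y :=
    hq.log (by positivity)
  have hF : HasDerivAt Fder
      (Real.log 2 * ((2 * (-1)) / (2 * (1 - y))) - 1 / 2 * ((((-1) * y - (1 - y) * 1) / y ^ 2) / ((1 - y) / y))) y :=
    (hl1.const_mul _).sub (hl2.const_mul _)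
  convert hF using 1
  field_simp
  ring

lemma deriv_eq_Fder {y : ℝ} (h0 : 0 < y) (h1 : y < 1) : deriv fDer0 y = Fder y :=
  (hasDerivAt_fDer0 h0 h1).deriv

lemma eventually_deriv_eq {y : ℝ} (h0 : 0 < y) (h1 : y < 1) :
    deriv fDer0 =ᶠ[nhds y] Fder := by
  filter_upwards [Ioo_mem_nhds h0 h1] with z hz
  exact deriv_eq_Fder hz.1 hz.2

lemma deriv2_eq {y : ℝ} (h0 : 0 < y) (h1 : y < 1) :
    deriv (deriv fDer0) y = 1 / (1 - y) * (1 / (2 * y) - Real.log 2) := by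
  rw [(eventually_deriv_eq h0 h1).deriv_eq]
  exact (hasDerivAt_Fder h0 h1).deriv

lemma deriv2_pos {y : ℝ} (h0 : 0 < y) (h1 : y < 1/2) :
    0 < deriv (deriv fDer0) y := by
  rw [deriv2_eq h0 (by linarith)]
  have hlog2 : Real.log 2 < 1 := by
    have := Real.log_two_lt_d9; linarith
  have h2y : 1 < 1 / (2 * y) := by
    rw [lt_div_iff₀ (by linarith)]; linarith
  have : (0:ℝ) < 1 - y := by linarith
  have := mul_pos (by positivity : (0:ℝ) < 1 / (1 - y)) (by linarith : (0:ℝ) < 1 / (2 * y) - Real.log 2)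
  exact this

lemma deriv_half : deriv fDer0 (1/2) = 0 := by
  rw [deriv_eq_Fder (by norm_num) (by norm_num)]
  unfold Fder
  rw [show (2:ℝ) * (1 - 1/2) = 1 by norm_num, show ((1:ℝ) - 1/2) / (1/2) = 1 by norm_num,
    Real.log_one]
  ring

-- deriv fDer0 negative on (0, 1/2)
lemma derivFDer0_neg {y : ℝ} (h0 : 0 < y) (h1 : y < 1/2) : deriv fDer0 y < 0 := by
  have hmono : StrictMonoOn (deriv fDer0) (Icc y (1/2)) := by
    apply strictMonoOn_of_deriv_pos (convex_Icc _ _)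
    · intro x hx
      have hx0 : 0 < x := lt_of_lt_of_le h0 hx.1
      have hx1 : x < 1 := lt_of_le_of_lt hx.2 (by norm_num)
      exact ((hasDerivAt_Fder hx0 hx1).continuousAt.congr
        (eventually_deriv_eq hx0 hx1).symm).continuousWithinAt
    · intro x hx
      rw [interior_Icc] at hx
      exact deriv2_pos (lt_trans h0 hx.1) hx.2
  have := hmono (left_mem_Icc.2 (by linarith)) (right_mem_Icc.2 (by linarith)) h1
  rw [deriv_half] at this
  exact this

lemma fDer0_half : fDer0 (1/2) = 0 := by
  have h : Real.logb 2 (1/2 : ℝ) = -1 := by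
    rw [show (1/2 : ℝ) = 2⁻¹ by norm_num, Real.logb_inv, Real.logb_self_eq_one] <;> norm_num
  norm_num [fDer0, binEnt, h]

lemma fDer0_pos {y : ℝ} (h0 : 0 < y) (h1 : y < 1/2) : 0 < fDer0 y := by
  have hanti : StrictAntiOn fDer0 (Icc y (1/2)) := by
    apply strictAntiOn_of_deriv_neg (convex_Icc _ _)
    · intro x hx
      have hx0 : 0 < x := lt_of_lt_of_le h0 hx.1
      have hx1 : x < 1 := lt_of_le_of_lt hx.2 (by norm_num)
      exact (hasDerivAt_fDer0 hx0 hx1).continuousAt.continuousWithinAt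
    · intro x hx
      rw [interior_Icc] at hx
      exact derivFDer0_neg (lt_trans h0 hx.1) hx.2
  have := hanti (left_mem_Icc.2 (by linarith)) (right_mem_Icc.2 (by linarith)) h1
  rw [fDer0_half] at this
  exact this

lemma fDer0_zero : fDer0 0 = Real.log 2 * (1 - Real.log 2) := by
  simp [fDer0, binEnt]

lemma tendsto_deriv_atBot :
    Tendsto (fun y => deriv fDer0 y) (nhdsWithin 0 (Ioi 0)) atBot := by
  have hev : (fun y => deriv fDer0 y) =ᶠ[nhdsWithin 0 (Ioi 0)] Fder := by
    filter_upwards [Ioo_mem_nhdsGT_of_mem (by norm_num : (0:ℝ) ∈ Ico (0:ℝ) 1)] with z hz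
    exact deriv_eq_Fder hz.1 hz.2
  rw [tendsto_congr' hev]
  have h1 : Tendsto (fun y : ℝ => Real.log 2 * Real.log (2 * (1 - y)))
      (nhdsWithin 0 (Ioi 0)) (nhds (Real.log 2 * Real.log 2)) := by
    have : ContinuousAt (fun y : ℝ => Real.log 2 * Real.log (2 * (1 - y))) 0 := by
      apply ContinuousAt.mul continuousAt_const
      exact (Real.continuousAt_log (by norm_num)).comp (by fun_prop)
    simpa using this.continuousWithinAt.tendsto
  have h2 : Tendsto (fun y : ℝ => 1 / 2 * Real.log ((1 - y) / y)) (nhdsWithin 0 (Ioi 0)) atTop := by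
    apply Tendsto.const_mul_atTop (by norm_num : (0:ℝ) < 1/2)
    apply Real.tendsto_log_atTop.comp
    have hq : Tendsto (fun y : ℝ => (1 - y) * y⁻¹) (nhdsWithin 0 (Ioi 0)) atTop := by
      apply Tendsto.pos_mul_atTop (by norm_num : (0:ℝ) < 1)
      · have h : Tendsto (fun y : ℝ => 1 - y) (nhdsWithin 0 (Ioi 0)) (nhds (1 - 0)) :=
          ((continuous_const.sub continuous_id).tendsto (0:ℝ)).mono_left nhdsWithin_le_nhds
        simpa using h
      · exact tendsto_inv_nhdsGT_zero
    exact hq.congr (fun y => (div_eq_mul_inv _ _).symm)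
  have := h1.add_atBot (tendsto_neg_atTop_atBot.comp h2)
  refine this.congr (fun y => ?_)
  simp [Fder, sub_eq_add_neg]

theorem fDer0_properties :
    fDer0 (1 / 2) = 0 ∧
    fDer0 0 = Real.log 2 * (1 - Real.log 2) ∧
    0 < Real.log 2 * (1 - Real.log 2) ∧
    (∀ y ∈ Set.Ioo (0 : ℝ) (1 / 2),
      deriv fDer0 y = Real.log 2 * Real.log (2 * (1 - y)) - 1 / 2 * Real.log ((1 - y) / y)) ∧
    deriv fDer0 (1 / 2) = 0 ∧
    Filter.Tendsto (fun y => deriv fDer0 y) (nhdsWithin 0 (Set.Ioi 0)) Filter.atBot ∧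
    (∀ y ∈ Set.Ioo (0 : ℝ) (1 / 2),
      deriv (deriv fDer0) y = 1 / (1 - y) * (1 / (2 * y) - Real.log 2) ∧
      0 < deriv (deriv fDer0) y) ∧
    (∀ y ∈ Set.Ioo (0 : ℝ) (1 / 2), 0 < fDer0 y) := by
  refine ⟨fDer0_half, fDer0_zero, ?_, ?_, deriv_half, tendsto_deriv_atBot, ?_, ?_⟩
  · have hlog2 : Real.log 2 < 1 := by have := Real.log_two_lt_d9; linarith
    have : (0:ℝ) < Real.log 2 := Real.log_pos (by norm_num)
    nlinarith
  · intro y hy; exact deriv_eq_Fder hy.1 (by linarith [hy.2])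
  · intro y hy; exact ⟨deriv2_eq hy.1 (by linarith [hy.2]), deriv2_pos hy.1 hy.2⟩
  · intro y hy; exact fDer0_pos hy.1 hy.2
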